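/- Let V = ℝ^d, Ω ⊆ P(V) a proper domain (open, connected, with closure disjoint from some projective hyperplane), Ω* = {[f] ∈ P(V*) : f(x) ≠ 0 ∀ [x] ∈ Ω}, and C_Ω the associated supremum cross-ratio metric. If Ω is dual convex (every boundary point x ∈ ∂Ω satisfies ξ(x) = 0 for some [ξ] ∈ Ω*), then (Ω, C_Ω) is a complete metric space. -/

import Mathlib

open scoped LinearAlgebra.Projectivization
open Projectivization

/-- The quotient topology on a projectivization. -/
instance projTopology {K V : Type*} [DivisionRing K] [AddCommGroup V] [Module K V]
    [TopologicalSpace V] : TopologicalSpace (ℙ K V) :=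
  inferInstanceAs (TopologicalSpace (Quotient (projectivizationSetoid K V)))

/-- `C_Ω(x,y) = sup_{[f],[g] ∈ Ω*} (1/2)|log|f(x)g(y)/(f(y)g(x))||`. -/
noncomputable def crossDist {V : Type*} [NormedAddCommGroup V] [NormedSpace ℝ V]
    (Ωd : Set (ℙ ℝ (StrongDual ℝ V))) (x y : ℙ ℝ V) : ℝ :=
  sSup {r : ℝ | ∃ f ∈ Ωd, ∃ g ∈ Ωd,
    r = (1/2) * |Real.log (abs ((f.rep x.rep * g.rep y.rep) / (f.rep y.rep * g.rep x.rep)))|}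

section Aux

variable {V : Type*} [NormedAddCommGroup V] [NormedSpace ℝ V]

/-- The defining set of `crossDist` with explicit representative vectors. -/
def Sraw (Ωd : Set (ℙ ℝ (StrongDual ℝ V))) (v w : V) : Set ℝ :=
  {r : ℝ | ∃ f ∈ Ωd, ∃ g ∈ Ωd,
    r = (1/2) * |Real.log (abs ((f.rep v * g.rep w) / (f.rep w * g.rep v)))|}

lemma crossDist_def (Ωd : Set (ℙ ℝ (StrongDual ℝ V))) (x y : ℙ ℝ V) :
    crossDist Ωd x y = sSup (Sraw Ωd x.rep y.rep) := rfl

lemma Sraw_smul (Ωd : Set (ℙ ℝ (StrongDual ℝ V))) {v w : V} (a b : ℝ)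
    (ha : a ≠ 0) (hb : b ≠ 0) :
    Sraw Ωd (a • v) (b • w) = Sraw Ωd v w := by
  have key : ∀ f g : ℙ ℝ (StrongDual ℝ V),
      abs ((f.rep (a • v) * g.rep (b • w)) / (f.rep (b • w) * g.rep (a • v)))
        = abs ((f.rep v * g.rep w) / (f.rep w * g.rep v)) := by
    intro f g
    have h1 : f.rep (a • v) = a * f.rep v := by rw [map_smul, smul_eq_mul]
    have h2 : g.rep (b • w) = b * g.rep w := by rw [map_smul, smul_eq_mul]
    have h3 : f.rep (b • w) = b * f.rep w := by rw [map_smul, smul_eq_mul]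
    have h4 : g.rep (a • v) = a * g.rep v := by rw [map_smul, smul_eq_mul]
    rw [h1, h2, h3, h4,
      show a * f.rep v * (b * g.rep w) = (a * b) * (f.rep v * g.rep w) by ring,
      show b * f.rep w * (a * g.rep v) = (a * b) * (f.rep w * g.rep v) by ring,
      mul_div_mul_left _ _ (mul_ne_zero ha hb)]
  ext r
  constructor <;> rintro ⟨f, hf, g, hg, rfl⟩
  · exact ⟨f, hf, g, hg, by rw [key]⟩
  · exact ⟨f, hf, g, hg, by rw [key]⟩

lemma exists_smul_rep {W : Type*} [AddCommGroup W] [Module ℝ W] {x : ℙ ℝ W} {v : W}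
    (hv : v ≠ 0) (h : Projectivization.mk ℝ v hv = x) :
    ∃ a : ℝ, a ≠ 0 ∧ a • x.rep = v := by
  rw [← Projectivization.mk_rep x, Projectivization.mk_eq_mk_iff] at h
  obtain ⟨a, ha⟩ := h
  exact ⟨(a : ℝ), a.ne_zero, by rw [← Units.smul_def, ha]⟩

lemma Sraw_rep_eq (Ωd : Set (ℙ ℝ (StrongDual ℝ V))) {x y : ℙ ℝ V} {vx vy : V}
    (hvx : vx ≠ 0) (hvy : vy ≠ 0)
    (hx : Projectivization.mk ℝ vx hvx = x) (hy : Projectivization.mk ℝ vy hvy = y) :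
    Sraw Ωd x.rep y.rep = Sraw Ωd vx vy := by
  obtain ⟨a, ha, hav⟩ := exists_smul_rep hvx hx
  obtain ⟨b, hb, hbw⟩ := exists_smul_rep hvy hy
  rw [← hav, ← hbw, Sraw_smul Ωd a b ha hb]

lemma crossDist_raw (Ωd : Set (ℙ ℝ (StrongDual ℝ V))) {x y : ℙ ℝ V} {vx vy : V}
    (hvx : vx ≠ 0) (hvy : vy ≠ 0)
    (hx : Projectivization.mk ℝ vx hvx = x) (hy : Projectivization.mk ℝ vy hvy = y) :
    crossDist Ωd x y = sSup (Sraw Ωd vx vy) := by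
  rw [crossDist_def, Sraw_rep_eq Ωd hvx hvy hx hy]

lemma zero_mem_Sraw (Ωd : Set (ℙ ℝ (StrongDual ℝ V))) (hne : Ωd.Nonempty)
    (v w : V) : (0:ℝ) ∈ Sraw Ωd v w := by
  obtain ⟨f, hf⟩ := hne
  refine ⟨f, hf, f, hf, ?_⟩
  rcases eq_or_ne (f.rep w * f.rep v) 0 with h | h
  · rw [show f.rep v * f.rep w = f.rep w * f.rep v from mul_comm _ _, h, div_zero]
    simp
  · rw [show f.rep v * f.rep w = f.rep w * f.rep v from mul_comm _ _, div_self h]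
    simp

lemma abs_log_le {r s : ℝ} (h : |r - 1| ≤ s) (hs : s ≤ 1/2) : |Real.log r| ≤ 2 * s := by
  have hs0 : 0 ≤ s := le_trans (abs_nonneg _) h
  have h1 : 1 - s ≤ r := by have := abs_le.1 h; linarith [this.1]
  have h2 : r ≤ 1 + s := by have := abs_le.1 h; linarith [this.2]
  have hr0 : 0 < r := by linarith
  rw [abs_le]
  constructor
  · have hlog : Real.log r⁻¹ ≤ r⁻¹ - 1 := Real.log_le_sub_one_of_pos (by positivity)
    rw [Real.log_inv] at hlog
    have hinv : r⁻¹ - 1 ≤ 2 * s := by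
      have h3 : 1 / r ≤ 2*s + 1 := by
        rw [div_le_iff₀ hr0]; nlinarith
      rw [← one_div]; linarith
    linarith
  · have := Real.log_le_sub_one_of_pos hr0
    linarith

lemma dual_lb_of_nonvanishing {f : StrongDual ℝ V} (hf : f ≠ 0) {v : V}
    (hv1 : ‖v‖ = 1) {ε : ℝ} (hε : 0 < ε) (hε1 : ε ≤ 1)
    (hne : ∀ w : V, w ≠ 0 → ‖w - v‖ < ε → f w ≠ 0) :
    ε/2 * ‖f‖ ≤ |f v| := by
  by_contra hcon
  push_neg at hcon
  have hfn : 0 < ‖f‖ := norm_pos_iff.2 hf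
  have hv0 : v ≠ 0 := by intro h; rw [h, norm_zero] at hv1; norm_num at hv1
  obtain ⟨z, hz1, hz2⟩ := f.exists_lt_apply_of_lt_opNorm (show ‖f‖/2 < ‖f‖ by linarith)
  rw [Real.norm_eq_abs] at hz2
  have hfz : f z ≠ 0 := by
    intro h; rw [h, abs_zero] at hz2; linarith
  set c := f v / f z with hc
  have hcabs : |c| < ε := by
    rw [hc, abs_div, div_lt_iff₀ (abs_pos.2 hfz)]
    calc |f v| < ε/2 * ‖f‖ := hcon
      _ = ε * (‖f‖/2) := by ring
      _ ≤ ε * |f z| := by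
          exact mul_le_mul_of_nonneg_left (le_of_lt hz2) (le_of_lt hε)
  set w := v - c • z with hw
  have hfw : f w = 0 := by
    rw [hw, map_sub, map_smul, smul_eq_mul, hc]
    field_simp; ring
  have hwv : ‖w - v‖ < ε := by
    rw [hw, show v - c • z - v = -(c • z) by abel, norm_neg, norm_smul, Real.norm_eq_abs]
    calc |c| * ‖z‖ ≤ |c| * 1 := by
          exact mul_le_mul_of_nonneg_left (le_of_lt hz1) (abs_nonneg _)
      _ = |c| := mul_one _
      _ < ε := hcabs
  have hw0 : w ≠ 0 := by
    intro h
    have hvz : v = c • z := by rwa [hw, sub_eq_zero] at h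
    have h1 : (1:ℝ) = |c| * ‖z‖ := by rw [← hv1, hvz, norm_smul, Real.norm_eq_abs]
    nlinarith [abs_nonneg c, norm_nonneg z]
  exact hne w hw0 hwv hfw

lemma Sraw_bddAbove (Ωd : Set (ℙ ℝ (StrongDual ℝ V))) {v w : V} {cv cw : ℝ}
    (hcv : 0 < cv) (hcv1 : cv ≤ 1) (hcw : 0 < cw) (hcw1 : cw ≤ 1)
    (hv1 : ‖v‖ = 1) (hw1 : ‖w‖ = 1)
    (hb : ∀ f ∈ Ωd, f.rep ≠ 0 ∧ cv * ‖f.rep‖ ≤ |f.rep v| ∧ cw * ‖f.rep‖ ≤ |f.rep w|) :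
    ∀ r ∈ Sraw Ωd v w, r ≤ (1/2) * Real.log (1/(cv*cw)) := by
  rintro r ⟨f, hf, g, hg, rfl⟩
  obtain ⟨hf0, hfv, hfw⟩ := hb f hf
  obtain ⟨hg0, hgv, hgw⟩ := hb g hg
  have hfn : 0 < ‖f.rep‖ := norm_pos_iff.2 hf0
  have hgn : 0 < ‖g.rep‖ := norm_pos_iff.2 hg0
  have hub_fv : |f.rep v| ≤ ‖f.rep‖ := by
    have := f.rep.le_opNorm v
    rwa [hv1, mul_one, Real.norm_eq_abs] at this
  have hub_gw : |g.rep w| ≤ ‖g.rep‖ := by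
    have := g.rep.le_opNorm w
    rwa [hw1, mul_one, Real.norm_eq_abs] at this
  have hub_fw : |f.rep w| ≤ ‖f.rep‖ := by
    have := f.rep.le_opNorm w
    rwa [hw1, mul_one, Real.norm_eq_abs] at this
  have hub_gv : |g.rep v| ≤ ‖g.rep‖ := by
    have := g.rep.le_opNorm v
    rwa [hv1, mul_one, Real.norm_eq_abs] at this
  set R := abs ((f.rep v * g.rep w) / (f.rep w * g.rep v)) with hR
  have hRe : R = (|f.rep v| * |g.rep w|) / (|f.rep w| * |g.rep v|) := by
    rw [hR, abs_div, abs_mul, abs_mul]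
  have hfw_pos : 0 < |f.rep w| := lt_of_lt_of_le (by positivity) hfw
  have hgv_pos : 0 < |g.rep v| := lt_of_lt_of_le (by positivity) hgv
  have hRub : R ≤ 1/(cv*cw) := by
    rw [hRe]
    calc (|f.rep v| * |g.rep w|) / (|f.rep w| * |g.rep v|)
        ≤ (‖f.rep‖ * ‖g.rep‖) / ((cw * ‖f.rep‖) * (cv * ‖g.rep‖)) := by
          apply div_le_div₀ (by positivity)
            (mul_le_mul hub_fv hub_gw (abs_nonneg _) (norm_nonneg _))
            (by positivity)
            (mul_le_mul hfw hgv (by positivity) (abs_nonneg _))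
      _ = 1/(cv*cw) := by field_simp
  have hRlb : cv * cw ≤ R := by
    rw [hRe]
    calc cv * cw = ((cv * ‖f.rep‖) * (cw * ‖g.rep‖)) / (‖f.rep‖ * ‖g.rep‖) := by
          field_simp
      _ ≤ (|f.rep v| * |g.rep w|) / (|f.rep w| * |g.rep v|) := by
          apply div_le_div₀ (by positivity)
            (mul_le_mul hfv hgw (by positivity) (abs_nonneg _))
            (by positivity)
            (mul_le_mul hub_fw hub_gv (abs_nonneg _) (norm_nonneg _))
  have hR0 : 0 < R := lt_of_lt_of_le (by positivity) hRlb
  have hcc : 0 < cv * cw := by positivity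
  have habs : |Real.log R| ≤ Real.log (1/(cv*cw)) := by
    rw [abs_le]
    constructor
    · rw [one_div, Real.log_inv, neg_neg]
      exact Real.log_le_log hcc hRlb
    · exact Real.log_le_log hR0 hRub
  linarith

lemma Sraw_close (Ωd : Set (ℙ ℝ (StrongDual ℝ V))) {v : V} {ε : ℝ} (hε : 0 < ε)
    (hb : ∀ f ∈ Ωd, f.rep ≠ 0 ∧ ε/2 * ‖f.rep‖ ≤ |f.rep v|)
    {w : V} (hwv : ‖w - v‖ ≤ ε/4) :
    ∀ r ∈ Sraw Ωd w v, r ≤ (4/ε) * ‖w - v‖ := by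
  rintro r ⟨f, hf, g, hg, rfl⟩
  set s := (2/ε) * ‖w - v‖ with hs
  have hs0 : 0 ≤ s := by positivity
  have hs2 : s ≤ 1/2 := by
    rw [hs]
    calc (2/ε) * ‖w - v‖ ≤ (2/ε) * (ε/4) := by
          exact mul_le_mul_of_nonneg_left hwv (by positivity)
      _ = 1/2 := by field_simp; ring
  have key : ∀ h : StrongDual ℝ V, h ≠ 0 → ε/2 * ‖h‖ ≤ |h v| →
      (h w ≠ 0 ∧ |Real.log (|h w| / |h v|)| ≤ 2 * s) := by
    intro h h0 hlb
    have hn : 0 < ‖h‖ := norm_pos_iff.2 h0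
    have hhv : 0 < |h v| := lt_of_lt_of_le (by positivity) hlb
    have hdiff : |h w - h v| ≤ ‖h‖ * ‖w - v‖ := by
      have := h.le_opNorm (w - v)
      rwa [map_sub, Real.norm_eq_abs] at this
    have hratio : abs (|h w| / |h v| - 1) ≤ s := by
      have hgoal : |h w| / |h v| - 1 = (|h w| - |h v|) / |h v| := by
        field_simp
      rw [hgoal, abs_div, abs_abs, div_le_iff₀ hhv]
      calc abs (|h w| - |h v|) ≤ |h w - h v| := abs_abs_sub_abs_le_abs_sub _ _
        _ ≤ ‖h‖ * ‖w - v‖ := hdiff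
        _ ≤ (2/ε * |h v|) * ‖w - v‖ := by
            apply mul_le_mul_of_nonneg_right _ (norm_nonneg _)
            rw [div_mul_eq_mul_div, le_div_iff₀ hε]
            linarith
        _ = s * |h v| := by rw [hs]; ring
    have hpos : 0 < |h w| := by
      have h1 : 1 - s ≤ |h w| / |h v| := by have := abs_le.1 hratio; linarith [this.1]
      have h2 : (0:ℝ) < 1 - s := by linarith
      have h3 := lt_of_lt_of_le h2 h1
      by_contra hcontra
      push_neg at hcontra
      have h4 : |h w| = 0 := le_antisymm hcontra (abs_nonneg _)
      rw [h4, zero_div] at h3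
      linarith
    exact ⟨abs_pos.1 hpos, abs_log_le hratio hs2⟩
  obtain ⟨hf0, hfv⟩ := hb f hf
  obtain ⟨hg0, hgv⟩ := hb g hg
  obtain ⟨hfw, hflog⟩ := key f.rep hf0 hfv
  obtain ⟨hgw, hglog⟩ := key g.rep hg0 hgv
  have hfv0 : f.rep v ≠ 0 := by
    intro h
    rw [h, abs_zero] at hfv
    nlinarith [norm_pos_iff.2 hf0]
  have hgv0 : g.rep v ≠ 0 := by
    intro h
    rw [h, abs_zero] at hgv
    nlinarith [norm_pos_iff.2 hg0]
  have hRe : abs ((f.rep w * g.rep v) / (f.rep v * g.rep w))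
      = (|f.rep w| / |f.rep v|) * (|g.rep v| / |g.rep w|) := by
    rw [abs_div, abs_mul, abs_mul, div_mul_div_comm]
  rw [hRe]
  have hA : (0:ℝ) < |f.rep w| / |f.rep v| := by
    apply div_pos (abs_pos.2 hfw) (abs_pos.2 hfv0)
  have hB : (0:ℝ) < |g.rep v| / |g.rep w| := by
    apply div_pos (abs_pos.2 hgv0) (abs_pos.2 hgw)
  rw [Real.log_mul (ne_of_gt hA) (ne_of_gt hB)]
  have hBlog : |Real.log (|g.rep v| / |g.rep w|)| ≤ 2 * s := by
    have : |g.rep v| / |g.rep w| = (|g.rep w| / |g.rep v|)⁻¹ := by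
      rw [inv_div]
    rw [this, Real.log_inv, abs_neg]
    exact hglog
  calc (1/2) * |Real.log (|f.rep w| / |f.rep v|) + Real.log (|g.rep v| / |g.rep w|)|
      ≤ (1/2) * (|Real.log (|f.rep w| / |f.rep v|)| + |Real.log (|g.rep v| / |g.rep w|)|) := by
        apply mul_le_mul_of_nonneg_left (abs_add_le _ _) (by norm_num)
    _ ≤ (1/2) * (2*s + 2*s) := by
        apply mul_le_mul_of_nonneg_left (add_le_add hflog hBlog) (by norm_num)
    _ = (4/ε) * ‖w - v‖ := by rw [hs]; ring

lemma crossDist_triangle (Ωd : Set (ℙ ℝ (StrongDual ℝ V))) (hne : Ωd.Nonempty)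
    {x y z : ℙ ℝ V}
    (hbxy : BddAbove (Sraw Ωd x.rep y.rep)) (hbyz : BddAbove (Sraw Ωd y.rep z.rep))
    (hy : ∀ f ∈ Ωd, f.rep y.rep ≠ 0) :
    crossDist Ωd x z ≤ crossDist Ωd x y + crossDist Ωd y z := by
  rw [crossDist_def]
  apply csSup_le ⟨0, zero_mem_Sraw Ωd hne _ _⟩
  rintro r ⟨f, hf, g, hg, rfl⟩
  have hfy := hy f hf
  have hgy := hy g hg
  set A := (f.rep x.rep * g.rep y.rep) / (f.rep y.rep * g.rep x.rep) with hA
  set B := (f.rep y.rep * g.rep z.rep) / (f.rep z.rep * g.rep y.rep) with hB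
  have hAB : (f.rep x.rep * g.rep z.rep) / (f.rep z.rep * g.rep x.rep) = A * B := by
    rw [hA, hB, div_mul_div_comm,
      show f.rep x.rep * g.rep y.rep * (f.rep y.rep * g.rep z.rep)
        = (f.rep y.rep * g.rep y.rep) * (f.rep x.rep * g.rep z.rep) by ring,
      show f.rep y.rep * g.rep x.rep * (f.rep z.rep * g.rep y.rep)
        = (f.rep y.rep * g.rep y.rep) * (f.rep z.rep * g.rep x.rep) by ring,
      mul_div_mul_left _ _ (mul_ne_zero hfy hgy)]
  have h1 : (1/2) * abs (Real.log (abs A)) ≤ crossDist Ωd x y :=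
    le_csSup hbxy ⟨f, hf, g, hg, rfl⟩
  have h2 : (1/2) * abs (Real.log (abs B)) ≤ crossDist Ωd y z :=
    le_csSup hbyz ⟨f, hf, g, hg, rfl⟩
  have hest : abs (Real.log (abs (A * B)))
      ≤ abs (Real.log (abs A)) + abs (Real.log (abs B)) := by
    rw [abs_mul]
    rcases eq_or_ne (abs A) 0 with h | h
    · rw [h, zero_mul, Real.log_zero, abs_zero]
      positivity
    · rcases eq_or_ne (abs B) 0 with h' | h'
      · rw [h', mul_zero, Real.log_zero, abs_zero]
        positivity
      · rw [Real.log_mul h h']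
        exact abs_add_le _ _
  calc (1/2) * abs (Real.log (abs ((f.rep x.rep * g.rep z.rep) / (f.rep z.rep * g.rep x.rep))))
      = (1/2) * abs (Real.log (abs (A * B))) := by rw [hAB]
    _ ≤ (1/2) * (abs (Real.log (abs A)) + abs (Real.log (abs B))) := by
        apply mul_le_mul_of_nonneg_left hest (by norm_num)
    _ = (1/2) * abs (Real.log (abs A)) + (1/2) * abs (Real.log (abs B)) := by ring
    _ ≤ crossDist Ωd x y + crossDist Ωd y z := add_le_add h1 h2

lemma cone_radius {Ω : Set (ℙ ℝ V)} (hopen : IsOpen Ω) {v : V} (hv : v ≠ 0)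
    (hmem : Projectivization.mk ℝ v hv ∈ Ω) :
    ∃ ε : ℝ, 0 < ε ∧ ε ≤ 1 ∧
      ∀ w, ∀ hw : w ≠ 0, ‖w - v‖ < ε → Projectivization.mk ℝ w hw ∈ Ω := by
  have hcont : Continuous (fun p : {u : V // u ≠ 0} => Projectivization.mk ℝ p.1 p.2) :=
    continuous_quotient_mk'
  have hopen' : IsOpen {p : {u : V // u ≠ 0} | Projectivization.mk ℝ p.1 p.2 ∈ Ω} :=
    hopen.preimage hcont
  rw [Metric.isOpen_iff] at hopen'
  obtain ⟨ε₀, hε₀, hball⟩ := hopen' ⟨v, hv⟩ hmem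
  refine ⟨min ε₀ 1, lt_min hε₀ one_pos, min_le_right _ _, ?_⟩
  intro w hw hwv
  have : (⟨w, hw⟩ : {u : V // u ≠ 0}) ∈ Metric.ball (⟨v, hv⟩ : {u : V // u ≠ 0}) ε₀ := by
    rw [Metric.mem_ball, Subtype.dist_eq, dist_eq_norm]
    exact lt_of_lt_of_le hwv (min_le_left _ _)
  exact hball this

lemma Ωd_apply_ne {Ω : Set (ℙ ℝ V)} {Ωd : Set (ℙ ℝ (StrongDual ℝ V))}
    (hΩd : Ωd = {φ : ℙ ℝ (StrongDual ℝ V) |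
      ∀ x ∈ Ω, Projectivization.rep φ (Projectivization.rep x) ≠ 0})
    {f : ℙ ℝ (StrongDual ℝ V)} (hf : f ∈ Ωd) {z : V} (hz : z ≠ 0)
    (hmem : Projectivization.mk ℝ z hz ∈ Ω) : f.rep z ≠ 0 := by
  subst hΩd
  have hrep := hf _ hmem
  obtain ⟨a, ha, hav⟩ := exists_smul_rep hz rfl
  rw [← hav, map_smul, smul_eq_mul]
  exact mul_ne_zero ha hrep

end Aux

/-- Let `V = ℝ^d` and let `Ω ⊆ P(V)` be a proper domain: open,
connected, and with closure disjoint from the projective hyperplane of some nonzero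
functional `η`.  If `Ω` is dual convex (every boundary point is annihilated by some
element of `Ω*`), then `(Ω, C_Ω)` is a complete metric space: every `C_Ω`-Cauchy sequence
in `Ω` converges with respect to `C_Ω` to a point of `Ω`. -/
theorem stmt_12 (d : ℕ)
    (Ω : Set (ℙ ℝ (Fin d → ℝ))) (hopen : IsOpen Ω) (hconn : IsConnected Ω)
    (hproper : ∃ η : StrongDual ℝ (Fin d → ℝ), η ≠ 0 ∧
      ∀ x ∈ closure Ω, η (Projectivization.rep x) ≠ 0)
    (Ωd : Set (ℙ ℝ (StrongDual ℝ (Fin d → ℝ))))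
    (hΩd : Ωd = {φ : ℙ ℝ (StrongDual ℝ (Fin d → ℝ)) |
      ∀ x ∈ Ω, Projectivization.rep φ (Projectivization.rep x) ≠ 0})
    (hdualconvex : ∀ x ∈ frontier Ω, ∃ ξ ∈ Ωd,
      Projectivization.rep ξ (Projectivization.rep x) = 0) :
    ∀ u : ℕ → ℙ ℝ (Fin d → ℝ), (∀ n, u n ∈ Ω) →
      (∀ ε : ℝ, 0 < ε → ∃ N : ℕ, ∀ m ≥ N, ∀ n ≥ N, crossDist Ωd (u m) (u n) < ε) →
      ∃ x ∈ Ω, Filter.Tendsto (fun n => crossDist Ωd (u n) x) Filter.atTop (nhds 0) := by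
  intro u hu hC
  obtain ⟨η, hη0, hηcl⟩ := hproper
  have hφ₀ : Projectivization.mk ℝ η hη0 ∈ Ωd := by
    rw [hΩd]
    intro x hx
    obtain ⟨a, ha, hav⟩ := exists_smul_rep hη0 rfl
    have h1 : η x.rep = a * (Projectivization.mk ℝ η hη0).rep x.rep := by
      conv_lhs => rw [← hav]
      rw [ContinuousLinearMap.smul_apply, smul_eq_mul]
    intro hzero
    apply hηcl x (subset_closure hx)
    rw [h1, hzero, mul_zero]
  have hΩdne : Ωd.Nonempty := ⟨_, hφ₀⟩
  have hrep : ∀ n, (u n).rep ≠ 0 := fun n => Projectivization.rep_nonzero _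
  have hnorm : ∀ n, ‖(u n).rep‖ ≠ 0 := fun n => norm_ne_zero_iff.2 (hrep n)
  set v : ℕ → Fin d → ℝ := fun n => ‖(u n).rep‖⁻¹ • (u n).rep with hvdef
  have hvnorm : ∀ n, ‖v n‖ = 1 := by
    intro n
    rw [hvdef]
    simp only
    rw [norm_smul, norm_inv, norm_norm, inv_mul_cancel₀ (hnorm n)]
  have hvne : ∀ n, v n ≠ 0 := by
    intro n h
    have h2 := hvnorm n
    rw [h, norm_zero] at h2
    norm_num at h2
  have hvmk : ∀ n, Projectivization.mk ℝ (v n) (hvne n) = u n := by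
    intro n
    conv_rhs => rw [← Projectivization.mk_rep (u n)]
    rw [Projectivization.mk_eq_mk_iff]
    refine ⟨Units.mk0 (‖(u n).rep‖⁻¹) (inv_ne_zero (hnorm n)), ?_⟩
    rw [Units.smul_def]
    rfl
  have keyc : ∀ (y : ℙ ℝ (Fin d → ℝ)), y ∈ Ω → ∀ (w : Fin d → ℝ) (hw : w ≠ 0), ‖w‖ = 1 →
      Projectivization.mk ℝ w hw = y →
      ∃ ε : ℝ, 0 < ε ∧ ε ≤ 1 ∧
        (∀ z, ∀ hz : z ≠ 0, ‖z - w‖ < ε → Projectivization.mk ℝ z hz ∈ Ω) ∧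
        ∀ f ∈ Ωd, f.rep ≠ 0 ∧ ε/2 * ‖f.rep‖ ≤ |f.rep w| := by
    intro y hy w hw hw1 hmk
    obtain ⟨ε, hε, hε1, hcone⟩ := cone_radius hopen hw (by rw [hmk]; exact hy)
    refine ⟨ε, hε, hε1, hcone, fun f hf => ⟨Projectivization.rep_nonzero f, ?_⟩⟩
    exact dual_lb_of_nonvanishing (Projectivization.rep_nonzero f) hw1 hε hε1
      (fun z hz hzw => Ωd_apply_ne hΩd hf hz (hcone z hz hzw))
  have hbddΩ : ∀ (y z : ℙ ℝ (Fin d → ℝ)) (wy wz : Fin d → ℝ) (hwy : wy ≠ 0) (hwz : wz ≠ 0),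
      ‖wy‖ = 1 → ‖wz‖ = 1 → Projectivization.mk ℝ wy hwy = y →
      Projectivization.mk ℝ wz hwz = z → y ∈ Ω → z ∈ Ω → BddAbove (Sraw Ωd wy wz) := by
    intro y z wy wz hwy hwz hwy1 hwz1 hmy hmz hyΩ hzΩ
    obtain ⟨εy, hεy, hεy1, _, hdy⟩ := keyc y hyΩ wy hwy hwy1 hmy
    obtain ⟨εz, hεz, hεz1, _, hdz⟩ := keyc z hzΩ wz hwz hwz1 hmz
    refine ⟨(1/2) * Real.log (1/((εy/2)*(εz/2))), ?_⟩
    intro r hr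
    refine Sraw_bddAbove Ωd (by positivity) (by linarith) (by positivity) (by linarith)
      hwy1 hwz1 ?_ r hr
    intro f hf
    exact ⟨(hdy f hf).1, (hdy f hf).2, (hdz f hf).2⟩
  obtain ⟨vlim, hvlims, φ, hφmono, hφtend⟩ :=
    (isCompact_sphere (0 : Fin d → ℝ) 1).tendsto_subseq
      (fun n => by rw [mem_sphere_zero_iff_norm]; exact hvnorm n)
  have hvlimnorm : ‖vlim‖ = 1 := mem_sphere_zero_iff_norm.1 hvlims
  have hvlimne : vlim ≠ 0 := by
    intro h
    rw [h, norm_zero] at hvlimnorm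
    norm_num at hvlimnorm
  have htendvec : Filter.Tendsto (fun k => v (φ k)) Filter.atTop (nhds vlim) := hφtend
  have hxcl : Projectivization.mk ℝ vlim hvlimne ∈ closure Ω := by
    have h1 : Filter.Tendsto (fun k => (⟨v (φ k), hvne (φ k)⟩ : {w : Fin d → ℝ // w ≠ 0}))
        Filter.atTop (nhds ⟨vlim, hvlimne⟩) := by
      rw [tendsto_subtype_rng]
      exact htendvec
    have h2 : Filter.Tendsto (fun k => u (φ k)) Filter.atTop
        (nhds (Projectivization.mk ℝ vlim hvlimne)) := by
      have hcont : Continuous (fun p : {w : Fin d → ℝ // w ≠ 0} =>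
          Projectivization.mk ℝ p.1 p.2) := continuous_quotient_mk'
      have h3 := (hcont.tendsto (⟨vlim, hvlimne⟩ : {w : Fin d → ℝ // w ≠ 0})).comp h1
      convert h3 using 1
      funext k
      rw [← hvmk (φ k)]
      rfl
    exact mem_closure_of_tendsto h2 (Filter.Eventually.of_forall fun k => hu (φ k))
  by_cases hxΩ : Projectivization.mk ℝ vlim hvlimne ∈ Ω
  · refine ⟨Projectivization.mk ℝ vlim hvlimne, hxΩ, ?_⟩
    obtain ⟨epsl, hepsl, hepsl1, hconel, hdl⟩ := keyc _ hxΩ vlim hvlimne hvlimnorm rfl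
    rw [Metric.tendsto_atTop]
    intro ε' hε'
    obtain ⟨N, hN⟩ := hC (ε'/2) (by linarith)
    have hsmall : ∀ᶠ k in Filter.atTop, ‖v (φ k) - vlim‖ < min (epsl/4) (epsl*ε'/16) := by
      obtain ⟨K, hK⟩ := Metric.tendsto_atTop.1 htendvec (min (epsl/4) (epsl*ε'/16)) (by positivity)
      filter_upwards [Filter.eventually_ge_atTop K] with k hk
      have := hK k hk
      rwa [dist_eq_norm] at this
    obtain ⟨k, hk1, hk2⟩ := (hsmall.and (Filter.eventually_ge_atTop N)).exists
    have hφkN : N ≤ φ k := le_trans hk2 hφmono.le_apply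
    have hclose : crossDist Ωd (u (φ k)) (Projectivization.mk ℝ vlim hvlimne) < ε'/2 := by
      rw [crossDist_raw Ωd (hvne (φ k)) hvlimne (hvmk (φ k)) rfl]
      have hb1 : ∀ r ∈ Sraw Ωd (v (φ k)) vlim, r ≤ (4/epsl) * ‖v (φ k) - vlim‖ :=
        Sraw_close Ωd hepsl (fun f hf => hdl f hf)
          (le_of_lt (lt_of_lt_of_le hk1 (min_le_left _ _)))
      have hsup := csSup_le ⟨0, zero_mem_Sraw Ωd hΩdne _ _⟩ hb1
      apply lt_of_le_of_lt hsup
      have h4 : ‖v (φ k) - vlim‖ < epsl*ε'/16 := lt_of_lt_of_le hk1 (min_le_right _ _)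
      calc (4/epsl) * ‖v (φ k) - vlim‖ < (4/epsl) * (epsl*ε'/16) := by
            exact mul_lt_mul_of_pos_left h4 (by positivity)
        _ = ε'/4 := by field_simp; ring
        _ < ε'/2 := by linarith
    refine ⟨N, fun n hn => ?_⟩
    have htri : crossDist Ωd (u n) (Projectivization.mk ℝ vlim hvlimne)
        ≤ crossDist Ωd (u n) (u (φ k))
          + crossDist Ωd (u (φ k)) (Projectivization.mk ℝ vlim hvlimne) := by
      apply crossDist_triangle Ωd hΩdne
      · rw [Sraw_rep_eq Ωd (hvne n) (hvne (φ k)) (hvmk n) (hvmk (φ k))]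
        exact hbddΩ _ _ _ _ _ _ (hvnorm n) (hvnorm (φ k)) (hvmk n) (hvmk (φ k)) (hu n) (hu (φ k))
      · rw [Sraw_rep_eq Ωd (hvne (φ k)) hvlimne (hvmk (φ k)) rfl]
        exact hbddΩ _ _ _ _ _ _ (hvnorm (φ k)) hvlimnorm (hvmk (φ k)) rfl (hu (φ k)) hxΩ
      · intro f hf
        exact Ωd_apply_ne hΩd hf (Projectivization.rep_nonzero (u (φ k)))
          (by rw [Projectivization.mk_rep]; exact hu (φ k))
    have hnonneg : 0 ≤ crossDist Ωd (u n) (Projectivization.mk ℝ vlim hvlimne) := by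
      rw [crossDist_raw Ωd (hvne n) hvlimne (hvmk n) rfl]
      exact le_csSup (hbddΩ _ _ _ _ _ _ (hvnorm n) hvlimnorm (hvmk n) rfl (hu n) hxΩ)
        (zero_mem_Sraw Ωd hΩdne _ _)
    rw [Real.dist_eq, sub_zero, abs_of_nonneg hnonneg]
    have hcau := hN n hn (φ k) hφkN
    linarith
  · exfalso
    have hfront : Projectivization.mk ℝ vlim hvlimne ∈ frontier Ω := by
      rw [frontier, hopen.interior_eq]
      exact ⟨hxcl, hxΩ⟩
    obtain ⟨ξ, hξΩd, hξ0⟩ := hdualconvex _ hfront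
    obtain ⟨a, ha, hav⟩ := exists_smul_rep hvlimne rfl
    have hξvlim : ξ.rep vlim = 0 := by
      conv_lhs => rw [← hav]
      rw [map_smul, smul_eq_mul, hξ0, mul_zero]
    set η₀ := Projectivization.mk ℝ η hη0 with hη₀def
    have hη₀vlim : η₀.rep vlim ≠ 0 := by
      obtain ⟨b, hb, hbv⟩ := exists_smul_rep hη0 rfl
      have hη1 : η vlim ≠ 0 := by
        have h5 : η ((Projectivization.mk ℝ vlim hvlimne).rep) ≠ 0 := hηcl _ hxcl
        have h6 : η vlim = a * η ((Projectivization.mk ℝ vlim hvlimne).rep) := by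
          conv_lhs => rw [← hav]
          rw [map_smul, smul_eq_mul]
        rw [h6]
        exact mul_ne_zero ha h5
      have h7 : η vlim = b * η₀.rep vlim := by
        conv_lhs => rw [← hbv]
        rw [ContinuousLinearMap.smul_apply, smul_eq_mul]
      intro h
      rw [h7, h, mul_zero] at hη1
      exact hη1 rfl
    obtain ⟨N, hN⟩ := hC 1 one_pos
    have haN : ξ.rep (v N) ≠ 0 :=
      Ωd_apply_ne hΩd hξΩd (hvne N) (by rw [hvmk]; exact hu N)
    have hbN : η₀.rep (v N) ≠ 0 :=
      Ωd_apply_ne hΩd hφ₀ (hvne N) (by rw [hvmk]; exact hu N)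
    have hck : ∀ k, ξ.rep (v (φ k)) ≠ 0 := fun k =>
      Ωd_apply_ne hΩd hξΩd (hvne (φ k)) (by rw [hvmk]; exact hu (φ k))
    have hcont1 : Filter.Tendsto (fun k => abs (ξ.rep (v N) * η₀.rep (v (φ k))))
        Filter.atTop (nhds (abs (ξ.rep (v N) * η₀.rep vlim))) :=
      (Filter.Tendsto.const_mul _ ((η₀.rep.continuous.tendsto vlim).comp htendvec)).abs
    have hL : 0 < abs (ξ.rep (v N) * η₀.rep vlim) := abs_pos.2 (mul_ne_zero haN hη₀vlim)
    have hcont2 : Filter.Tendsto (fun k => abs (ξ.rep (v (φ k)) * η₀.rep (v N)))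
        Filter.atTop (nhdsWithin 0 (Set.Ioi 0)) := by
      apply tendsto_nhdsWithin_of_tendsto_nhds_of_eventually_within
      · have h7 : Filter.Tendsto (fun k => ξ.rep (v (φ k)) * η₀.rep (v N)) Filter.atTop
            (nhds (ξ.rep vlim * η₀.rep (v N))) :=
          Filter.Tendsto.mul_const _ ((ξ.rep.continuous.tendsto vlim).comp htendvec)
        have h8 := h7.abs
        rwa [hξvlim, zero_mul, abs_zero] at h8
      · exact Filter.Eventually.of_forall fun k =>
          abs_pos.2 (mul_ne_zero (hck k) hbN)
    have hdiv : Filter.Tendsto (fun k => abs (ξ.rep (v N) * η₀.rep (v (φ k)))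
        * (abs (ξ.rep (v (φ k)) * η₀.rep (v N)))⁻¹) Filter.atTop Filter.atTop :=
      Filter.Tendsto.pos_mul_atTop hL hcont1 (tendsto_inv_nhdsGT_zero.comp hcont2)
    have hlog := Real.tendsto_log_atTop.comp hdiv
    obtain ⟨k, hk2, hkN⟩ :=
      ((hlog.eventually_ge_atTop 2).and (Filter.eventually_ge_atTop N)).exists
    simp only [Function.comp] at hk2
    have h9 : abs ((ξ.rep (v N) * η₀.rep (v (φ k))) / (ξ.rep (v (φ k)) * η₀.rep (v N)))
        = abs (ξ.rep (v N) * η₀.rep (v (φ k)))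
          * (abs (ξ.rep (v (φ k)) * η₀.rep (v N)))⁻¹ := by
      rw [abs_div, div_eq_mul_inv]
    have hmem : (1/2) * abs (Real.log (abs ((ξ.rep (v N) * η₀.rep (v (φ k)))
        / (ξ.rep (v (φ k)) * η₀.rep (v N))))) ∈ Sraw Ωd (v N) (v (φ k)) :=
      ⟨ξ, hξΩd, η₀, hφ₀, rfl⟩
    have hle : (1/2) * abs (Real.log (abs ((ξ.rep (v N) * η₀.rep (v (φ k)))
        / (ξ.rep (v (φ k)) * η₀.rep (v N))))) ≤ crossDist Ωd (u N) (u (φ k)) := by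
      rw [crossDist_raw Ωd (hvne N) (hvne (φ k)) (hvmk N) (hvmk (φ k))]
      exact le_csSup (hbddΩ _ _ _ _ _ _ (hvnorm N) (hvnorm (φ k)) (hvmk N) (hvmk (φ k))
        (hu N) (hu (φ k))) hmem
    have hlt := hN N (le_refl N) (φ k) (le_trans hkN hφmono.le_apply)
    have h10 : (1:ℝ) ≤ (1/2) * abs (Real.log (abs ((ξ.rep (v N) * η₀.rep (v (φ k)))
        / (ξ.rep (v (φ k)) * η₀.rep (v N))))) := by
      rw [h9]
      have h11 := le_abs_self (Real.log (abs (ξ.rep (v N) * η₀.rep (v (φ k)))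
        * (abs (ξ.rep (v (φ k)) * η₀.rep (v N)))⁻¹))
      linarith
    linarith
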